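/- Any separable LMM density matrix σ on ℂ^d ⊗ ℂ^d satisfies Tr σ² ≤ 1/d; equivalently, the Hilbert–Schmidt distance of σ to the maximally mixed state ω = 𝟙/d² satisfies ‖σ − ω‖ ≤ √(d−1)/d. -/

import Mathlib

open Matrix

private lemma sum_swap3 {A B C M : Type*} [AddCommMonoid M] [Fintype A] [Fintype B] [Fintype C]
    (f : A → B → C → M) :
    ∑ a, ∑ b, ∑ c, f a b c = ∑ b, ∑ c, ∑ a, f a b c :=
  calc ∑ a, ∑ b, ∑ c, f a b c
      = ∑ b, ∑ a, ∑ c, f a b c := Finset.sum_comm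
    _ = ∑ b, ∑ c, ∑ a, f a b c := Finset.sum_congr rfl fun b _ => Finset.sum_comm

private lemma sum_swap4 {A B C D M : Type*} [AddCommMonoid M] [Fintype A] [Fintype B] [Fintype C]
    [Fintype D] (f : A → B → C → D → M) :
    ∑ a, ∑ b, ∑ c, ∑ e, f a b c e = ∑ c, ∑ e, ∑ a, ∑ b, f a b c e :=
  calc ∑ a, ∑ b, ∑ c, ∑ e, f a b c e
      = ∑ a, ∑ c, ∑ b, ∑ e, f a b c e := Finset.sum_congr rfl fun a _ => Finset.sum_comm
    _ = ∑ c, ∑ a, ∑ b, ∑ e, f a b c e := Finset.sum_comm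
    _ = ∑ c, ∑ a, ∑ e, ∑ b, f a b c e :=
        Finset.sum_congr rfl fun c _ => Finset.sum_congr rfl fun a _ => Finset.sum_comm
    _ = ∑ c, ∑ e, ∑ a, ∑ b, f a b c e := Finset.sum_congr rfl fun c _ => Finset.sum_comm

/-- A separable LMM density matrix `σ` on `ℂ^d ⊗ ℂ^d` satisfies `Tr σ² ≤ 1/d`;
equivalently its Hilbert–Schmidt distance to the maximally mixed state `ω = 𝟙/d²`
is at most `√(d-1)/d`. -/
theorem separable_LMM_purity_bound (d : ℕ) [NeZero d]
    (σ : Matrix (ZMod d × ZMod d) (ZMod d × ZMod d) ℂ)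
    -- separability: a convex combination of pure product states
    (n : ℕ) (lam : Fin n → ℝ) (φ ψ : Fin n → ZMod d → ℂ)
    (hlam : ∀ α, 0 ≤ lam α) (hsum : ∑ α, lam α = 1)
    (hφ : ∀ α, ∑ s : ZMod d, ‖φ α s‖ ^ 2 = 1) (hψ : ∀ α, ∑ s : ZMod d, ‖ψ α s‖ ^ 2 = 1)
    (hsep : σ = ∑ α, (lam α : ℂ) •
      Matrix.vecMulVec (fun p : ZMod d × ZMod d => φ α p.1 * ψ α p.2)
        (star (fun p : ZMod d × ZMod d => φ α p.1 * ψ α p.2)))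
    -- LMM: both partial traces are maximally mixed
    (hB : (fun a b => ∑ t : ZMod d, σ (a, t) (b, t))
      = ((d : ℂ))⁻¹ • (1 : Matrix (ZMod d) (ZMod d) ℂ))
    (hA : (fun a b => ∑ s : ZMod d, σ (s, a) (s, b))
      = ((d : ℂ))⁻¹ • (1 : Matrix (ZMod d) (ZMod d) ℂ)) :
    ((σ * σ).trace).re ≤ 1 / d ∧
    Real.sqrt ((((σ - ((d : ℂ) ^ 2)⁻¹ • 1)ᴴ * (σ - ((d : ℂ) ^ 2)⁻¹ • 1)).trace).re)
      ≤ Real.sqrt (d - 1) / d := by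
  have hd0 : (0:ℝ) < d := Nat.cast_pos.mpr (Nat.pos_of_ne_zero (NeZero.ne d))
  -- unit norm sums in ℂ
  have hφ1 : ∀ α, ∑ s : ZMod d, φ α s * star (φ α s) = 1 := by
    intro α
    calc ∑ s : ZMod d, φ α s * star (φ α s)
        = ∑ s : ZMod d, ((‖φ α s‖^2 : ℝ) : ℂ) :=
          Finset.sum_congr rfl fun s _ => by exact_mod_cast Complex.mul_conj' _
      _ = 1 := by rw [← Complex.ofReal_sum, hφ α, Complex.ofReal_one]
  have hψ1 : ∀ α, ∑ t : ZMod d, ψ α t * star (ψ α t) = 1 := by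
    intro α
    calc ∑ t : ZMod d, ψ α t * star (ψ α t)
        = ∑ t : ZMod d, ((‖ψ α t‖^2 : ℝ) : ℂ) :=
          Finset.sum_congr rfl fun t _ => by exact_mod_cast Complex.mul_conj' _
      _ = 1 := by rw [← Complex.ofReal_sum, hψ α, Complex.ofReal_one]
  -- the marginal identity from hB
  have key : ∀ a b : ZMod d, ∑ β, (lam β : ℂ) * (φ β a * star (φ β b))
      = (d:ℂ)⁻¹ * (if a = b then 1 else 0) := by
    intro a b
    have h := congrFun (congrFun hB a) b
    rw [hsep] at h
    simp only [Matrix.sum_apply, Matrix.smul_apply, Matrix.vecMulVec_apply, smul_eq_mul,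
      Pi.star_apply, Matrix.smul_apply, Matrix.one_apply] at h
    rw [Finset.sum_comm] at h
    rw [← h]
    refine Finset.sum_congr rfl fun β _ => ?_
    calc (lam β : ℂ) * (φ β a * star (φ β b))
        = ((lam β : ℂ) * (φ β a * star (φ β b))) * ∑ t : ZMod d, ψ β t * star (ψ β t) := by
          rw [hψ1 β, mul_one]
      _ = ∑ t : ZMod d, (lam β : ℂ) * (φ β a * ψ β t * star (φ β b * ψ β t)) := by
          rw [Finset.mul_sum]
          exact Finset.sum_congr rfl fun t _ => by rw [star_mul']; ring
  -- product vectors and inner products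
  set v : Fin n → ZMod d × ZMod d → ℂ := fun α p => φ α p.1 * ψ α p.2 with hv
  set Fφ : Fin n → Fin n → ℂ := fun α β => ∑ s : ZMod d, star (φ α s) * φ β s with hFφ
  set Fψ : Fin n → Fin n → ℂ := fun α β => ∑ t : ZMod d, star (ψ α t) * ψ β t with hFψ
  set G : Fin n → Fin n → ℂ := fun α β => ∑ q : ZMod d × ZMod d, star (v α q) * v β q with hG
  have hσe : ∀ p q, σ p q = ∑ α, (lam α : ℂ) * (v α p * star (v α q)) := by
    intro p q
    rw [hsep]
    simp [Matrix.sum_apply, Matrix.vecMulVec_apply, hv]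
  -- star of Fφ and G
  have hstarFφ : ∀ α β, star (Fφ α β) = ∑ b : ZMod d, φ α b * star (φ β b) := by
    intro α β
    rw [hFφ]
    simp only [star_sum, star_mul', star_star]
  have hstarG : ∀ α β, star (G α β) = ∑ p : ZMod d × ZMod d, v α p * star (v β p) := by
    intro α β
    rw [hG]
    simp only [star_sum, star_mul', star_star]
  -- complex version of the key sum rule
  have keyF : ∀ α, ∑ β, (lam β : ℂ) * (Fφ α β * star (Fφ α β)) = (d:ℂ)⁻¹ := by
    intro α
    calc ∑ β, (lam β : ℂ) * (Fφ α β * star (Fφ α β))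
        = ∑ β, ∑ a : ZMod d, ∑ b : ZMod d,
            (lam β : ℂ) * ((star (φ α a) * φ β a) * (φ α b * star (φ β b))) := by
          refine Finset.sum_congr rfl fun β _ => ?_
          rw [hstarFφ]
          simp only [hFφ]
          rw [Finset.sum_mul_sum, Finset.mul_sum]
          exact Finset.sum_congr rfl fun a _ => by rw [Finset.mul_sum]
      _ = ∑ a : ZMod d, ∑ b : ZMod d, ∑ β,
            (lam β : ℂ) * ((star (φ α a) * φ β a) * (φ α b * star (φ β b))) := sum_swap3 _
      _ = ∑ a : ZMod d, ∑ b : ZMod d,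
            (star (φ α a) * φ α b) * (∑ β, (lam β : ℂ) * (φ β a * star (φ β b))) := by
          refine Finset.sum_congr rfl fun a _ => Finset.sum_congr rfl fun b _ => ?_
          rw [Finset.mul_sum]
          exact Finset.sum_congr rfl fun β _ => by ring
      _ = ∑ a : ZMod d, ∑ b : ZMod d,
            (star (φ α a) * φ α b) * ((d:ℂ)⁻¹ * (if a = b then 1 else 0)) := by
          refine Finset.sum_congr rfl fun a _ => Finset.sum_congr rfl fun b _ => ?_
          rw [key a b]
      _ = ∑ a : ZMod d, (star (φ α a) * φ α a) * (d:ℂ)⁻¹ := by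
          refine Finset.sum_congr rfl fun a _ => ?_
          rw [Finset.sum_eq_single a (fun b _ hb => by simp [Ne.symm hb]) (by simp)]
          simp
      _ = (d:ℂ)⁻¹ := by
          rw [← Finset.sum_mul]
          have : ∑ a : ZMod d, star (φ α a) * φ α a = 1 := by
            rw [← hφ1 α]; exact Finset.sum_congr rfl fun a _ => mul_comm _ _
          rw [this, one_mul]
  -- trace of σ²
  have htr : (σ * σ).trace = ∑ α, ∑ β, ((lam α : ℂ) * (lam β : ℂ)) * (G α β * star (G α β)) := by
    calc (σ * σ).trace
        = ∑ p : ZMod d × ZMod d, ∑ q : ZMod d × ZMod d, σ p q * σ q p := by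
          simp [Matrix.trace, Matrix.mul_apply, Matrix.diag]
      _ = ∑ p : ZMod d × ZMod d, ∑ q : ZMod d × ZMod d, ∑ α, ∑ β,
            ((lam α : ℂ) * (v α p * star (v α q))) * ((lam β : ℂ) * (v β q * star (v β p))) := by
          refine Finset.sum_congr rfl fun p _ => Finset.sum_congr rfl fun q _ => ?_
          rw [hσe p q, hσe q p, Finset.sum_mul_sum]
      _ = ∑ α, ∑ β, ∑ p : ZMod d × ZMod d, ∑ q : ZMod d × ZMod d,
            ((lam α : ℂ) * (v α p * star (v α q))) * ((lam β : ℂ) * (v β q * star (v β p))) :=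
          sum_swap4 _
      _ = ∑ α, ∑ β, ((lam α : ℂ) * (lam β : ℂ)) * (G α β * star (G α β)) := by
          refine Finset.sum_congr rfl fun α _ => Finset.sum_congr rfl fun β _ => ?_
          rw [hstarG, hG]
          rw [show (∑ q : ZMod d × ZMod d, star (v α q) * v β q) *
              (∑ p : ZMod d × ZMod d, v α p * star (v β p))
              = ∑ p : ZMod d × ZMod d, ∑ q : ZMod d × ZMod d,
                (star (v α q) * v β q) * (v α p * star (v β p)) from by
            rw [Finset.sum_mul_sum]; exact Finset.sum_comm]
          rw [Finset.mul_sum]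
          refine Finset.sum_congr rfl fun p _ => ?_
          rw [Finset.mul_sum]
          refine Finset.sum_congr rfl fun q _ => ?_
          ring
  -- factorization of G
  have hGfact : ∀ α β, G α β = Fφ α β * Fψ α β := by
    intro α β
    show (∑ q : ZMod d × ZMod d, star (v α q) * v β q)
        = (∑ s : ZMod d, star (φ α s) * φ β s) * (∑ t : ZMod d, star (ψ α t) * ψ β t)
    rw [Finset.sum_mul_sum]
    rw [show (∑ q : ZMod d × ZMod d, star (v α q) * v β q)
        = ∑ s : ZMod d, ∑ t : ZMod d, star (v α (s, t)) * v β (s, t) from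
      Fintype.sum_prod_type _]
    refine Finset.sum_congr rfl fun s _ => Finset.sum_congr rfl fun t _ => ?_
    show star (φ α s * ψ α t) * (φ β s * ψ β t) = _
    rw [star_mul']
    ring
  -- Cauchy–Schwarz for ψ
  have hCS : ∀ α β, ‖Fψ α β‖ ^ 2 ≤ 1 := by
    intro α β
    have h1 : ‖Fψ α β‖ ≤ ∑ t : ZMod d, ‖ψ α t‖ * ‖ψ β t‖ := by
      rw [hFψ]
      refine (norm_sum_le _ _).trans (le_of_eq (Finset.sum_congr rfl fun t _ => ?_))
      rw [norm_mul, norm_star]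
    have h2 : (∑ t : ZMod d, ‖ψ α t‖ * ‖ψ β t‖) ^ 2
        ≤ (∑ t : ZMod d, ‖ψ α t‖ ^ 2) * (∑ t : ZMod d, ‖ψ β t‖ ^ 2) :=
      Finset.sum_mul_sq_le_sq_mul_sq _ _ _
    have h3 : (0:ℝ) ≤ ∑ t : ZMod d, ‖ψ α t‖ * ‖ψ β t‖ :=
      Finset.sum_nonneg fun t _ => mul_nonneg (norm_nonneg _) (norm_nonneg _)
    calc ‖Fψ α β‖ ^ 2 ≤ (∑ t : ZMod d, ‖ψ α t‖ * ‖ψ β t‖) ^ 2 :=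
          pow_le_pow_left₀ (norm_nonneg _) h1 2
      _ ≤ 1 := by rw [hψ α, hψ β, mul_one] at h2; exact h2
  -- real parts
  have hre_term : ∀ (c : ℝ) (z : ℂ), ((c : ℂ) * (z * star z)).re = c * ‖z‖ ^ 2 := by
    intro c z
    rw [show z * star z = ((‖z‖ ^ 2 : ℝ) : ℂ) from by exact_mod_cast Complex.mul_conj' z,
      ← Complex.ofReal_mul, Complex.ofReal_re]
  have hdinv_re : ((d:ℂ)⁻¹).re = (d:ℝ)⁻¹ := by
    rw [show ((d:ℂ))⁻¹ = (((d:ℝ)⁻¹ : ℝ) : ℂ) from by push_cast; ring, Complex.ofReal_re]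
  have keyFre : ∀ α, ∑ β, lam β * ‖Fφ α β‖ ^ 2 = (d:ℝ)⁻¹ := by
    intro α
    have := congrArg Complex.re (keyF α)
    rw [Complex.re_sum, hdinv_re] at this
    rw [← this]
    exact Finset.sum_congr rfl fun β _ => (hre_term _ _).symm
  -- the purity bound
  have hpure : ((σ * σ).trace).re ≤ 1 / d := by
    rw [htr, Complex.re_sum]
    have : ∀ α, (∑ β, ((lam α : ℂ) * (lam β : ℂ)) * (G α β * star (G α β))).re
        = ∑ β, (lam α * lam β) * ‖G α β‖ ^ 2 := by
      intro α
      rw [Complex.re_sum]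
      refine Finset.sum_congr rfl fun β _ => ?_
      rw [show ((lam α : ℂ) * (lam β : ℂ)) = ((lam α * lam β : ℝ) : ℂ) from by push_cast; ring]
      exact hre_term _ _
    calc ∑ α, (∑ β, ((lam α : ℂ) * (lam β : ℂ)) * (G α β * star (G α β))).re
        = ∑ α, ∑ β, (lam α * lam β) * ‖G α β‖ ^ 2 :=
          Finset.sum_congr rfl fun α _ => this α
      _ ≤ ∑ α, ∑ β, (lam α * lam β) * ‖Fφ α β‖ ^ 2 := by
          refine Finset.sum_le_sum fun α _ => Finset.sum_le_sum fun β _ => ?_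
          rw [hGfact, norm_mul, mul_pow]
          have hb : ‖Fφ α β‖ ^ 2 * ‖Fψ α β‖ ^ 2 ≤ ‖Fφ α β‖ ^ 2 * 1 :=
            mul_le_mul_of_nonneg_left (hCS α β) (sq_nonneg _)
          rw [mul_one] at hb
          exact mul_le_mul_of_nonneg_left hb (mul_nonneg (hlam α) (hlam β))
      _ = ∑ α, lam α * ((d:ℝ)⁻¹) := by
          refine Finset.sum_congr rfl fun α _ => ?_
          rw [← keyFre α, Finset.mul_sum]
          exact Finset.sum_congr rfl fun β _ => by ring
      _ = 1 / d := by rw [← Finset.sum_mul, hsum, one_mul, one_div]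
  refine ⟨hpure, ?_⟩
  -- trace of σ is 1
  have htrσ : σ.trace = 1 := by
    have h : ∀ a : ZMod d, ∑ t : ZMod d, σ (a, t) (a, t) = (d:ℂ)⁻¹ := by
      intro a
      have := congrFun (congrFun hB a) a
      simpa [Matrix.one_apply] using this
    have : σ.trace = ∑ a : ZMod d, ∑ t : ZMod d, σ (a, t) (a, t) := by
      rw [Matrix.trace]
      exact Fintype.sum_prod_type _
    rw [this, Finset.sum_congr rfl fun a _ => h a, Finset.sum_const, Finset.card_univ,
      ZMod.card, nsmul_eq_mul]
    field_simp
    exact div_self (Nat.cast_ne_zero.mpr (NeZero.ne d))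
  -- hermiticity of σ
  have hherm : σᴴ = σ := by
    rw [hsep]
    ext i j
    simp only [Matrix.conjTranspose_apply, Matrix.sum_apply, Matrix.smul_apply,
      Matrix.vecMulVec_apply, Pi.star_apply, smul_eq_mul, star_sum]
    refine Finset.sum_congr rfl fun α _ => ?_
    simp only [Complex.star_def, _root_.map_mul, Complex.conj_conj, Complex.conj_ofReal]
    ring
  -- compute the shifted trace
  set c : ℂ := ((d : ℂ) ^ 2)⁻¹ with hc
  have hcstar : star c = c := by rw [hc]; simp
  have hexp : ((σ - c • 1)ᴴ * (σ - c • 1)).trace = (σ * σ).trace - c := by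
    rw [Matrix.conjTranspose_sub, hherm, Matrix.conjTranspose_smul, hcstar,
      Matrix.conjTranspose_one, sub_mul, mul_sub, mul_sub, Matrix.smul_mul, Matrix.mul_smul,
      Matrix.one_mul, Matrix.mul_one, Matrix.smul_mul, Matrix.one_mul, smul_smul]
    have hcard : (Fintype.card (ZMod d × ZMod d) : ℂ) = (d:ℂ)^2 := by
      simp [Fintype.card_prod, ZMod.card]; ring
    simp only [Matrix.trace_sub, Matrix.trace_smul, htrσ, Matrix.trace_one, smul_eq_mul,
      hcard, mul_one]
    have hd0' : ((d:ℂ)^2) ≠ 0 := by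
      exact pow_ne_zero 2 (Nat.cast_ne_zero.mpr (NeZero.ne d))
    rw [hc, mul_assoc, inv_mul_cancel₀ hd0', mul_one]
    ring
  have hcre : c.re = ((d:ℝ)^2)⁻¹ := by
    rw [hc, show ((d:ℂ)^2)⁻¹ = ((((d:ℝ)^2)⁻¹ : ℝ) : ℂ) from by push_cast; ring,
      Complex.ofReal_re]
  have hval : (((σ - c • 1)ᴴ * (σ - c • 1)).trace).re ≤ ((d:ℝ) - 1) / (d:ℝ)^2 := by
    rw [hexp, Complex.sub_re, hcre]
    have : ((σ * σ).trace).re ≤ 1 / d := hpure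
    have hstep : ((σ * σ).trace).re - ((d:ℝ)^2)⁻¹ ≤ 1 / d - ((d:ℝ)^2)⁻¹ := by linarith
    refine hstep.trans (le_of_eq ?_)
    field_simp
  calc Real.sqrt ((((σ - c • 1)ᴴ * (σ - c • 1)).trace).re)
      ≤ Real.sqrt (((d:ℝ) - 1) / (d:ℝ)^2) := Real.sqrt_le_sqrt hval
    _ = Real.sqrt ((d:ℝ) - 1) / d := by
        have hd1 : (1:ℝ) ≤ (d:ℝ) := by
          exact_mod_cast Nat.one_le_iff_ne_zero.mpr (NeZero.ne d)
        rw [Real.sqrt_div (by linarith), Real.sqrt_sq hd0.le]
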